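/- Fix q_X, q_Y ∈ (0, 1/2]. The function G(θ) = (1-q_X) H_b((q_Y - θ)/(1-q_X)) + q_X H_b(θ/q_X), defined for θ ∈ [max{0, q_X+q_Y-1}, min{q_X,q_Y}], attains its minimum at θ* = min{q_X, q_Y}. -/

import Mathlib

/-- Binary entropy function. -/
noncomputable def Hb (t : ℝ) : ℝ := -(t * Real.log t) - (1 - t) * Real.log (1 - t)

lemma hHbEq (t : ℝ) : Hb t = Real.binEntropy t := by
  rw [Hb, Real.binEntropy, Real.log_inv, Real.log_inv]; ring

lemma binEntropy_le_binEntropy (u v : ℝ) (hu : 0 ≤ u) (huv : u ≤ v) (huv' : u ≤ 1 - v) :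
    Real.binEntropy u ≤ Real.binEntropy v := by
  have hu2 : u ≤ 2⁻¹ := by linarith
  rcases le_or_gt v 2⁻¹ with h | h
  · exact Real.binEntropy_strictMonoOn.monotoneOn ⟨hu, hu2⟩ ⟨by linarith, h⟩ huv
  · rw [← Real.binEntropy_one_sub v]
    exact Real.binEntropy_strictMonoOn.monotoneOn ⟨hu, hu2⟩ ⟨by linarith, by linarith⟩ huv'

lemma concaveOn_binEntropy_affine {S : Set ℝ} (hS : Convex ℝ S) (c d : ℝ)
    (h : ∀ x ∈ S, c + d*x ∈ Set.Icc (0:ℝ) 1) :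
    ConcaveOn ℝ S (fun x => Real.binEntropy (c + d*x)) := by
  refine ⟨hS, fun x hx y hy a b ha hb hab => ?_⟩
  have h2 := Real.strictConcave_binEntropy.concaveOn.2 (h x hx) (h y hy) ha hb hab
  simp only [smul_eq_mul] at *
  have e : c + d*(a*x + b*y) = a*(c+d*x) + b*(c+d*y) := by linear_combination (-c) * hab
  rw [e]; exact h2

lemma mul_binEntropy_div_mono (q p p' : ℝ) (hq : 0 < q) (hqp : q < p) (hpp' : p ≤ p') :
    p * Real.binEntropy (q/p) ≤ p' * Real.binEntropy (q/p') := by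
  have hd : ∀ x ∈ Set.Ioi q, HasDerivAt (fun x => x*Real.log x - (x-q)*Real.log (x-q))
      (Real.log x - Real.log (x-q)) x := by
    intro x hx
    have hx' : q < x := hx
    have h1 := Real.hasDerivAt_mul_log (x := x) ((hq.trans hx').ne')
    have h2 : HasDerivAt (fun x => (x-q)*Real.log (x-q)) (Real.log (x-q) + 1) x := by
      have := (Real.hasDerivAt_mul_log (x := x - q) (ne_of_gt (sub_pos.mpr hx'))).comp x
        ((hasDerivAt_id x).sub_const q)
      simpa [Function.comp_def] using this
    have h3 := h1.sub h2
    rw [show Real.log x + 1 - (Real.log (x-q) + 1) = Real.log x - Real.log (x-q) by ring] at h3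
    exact h3
  have hmono : MonotoneOn (fun x => x*Real.log x - (x-q)*Real.log (x-q)) (Set.Icc p p') := by
    have hdiff : ∀ x ∈ Set.Icc p p', DifferentiableAt ℝ
        (fun x => x*Real.log x - (x-q)*Real.log (x-q)) x :=
      fun x hx => (hd x (lt_of_lt_of_le hqp hx.1)).differentiableAt
    apply monotoneOn_of_deriv_nonneg (convex_Icc p p')
      (fun x hx => (hdiff x hx).continuousAt.continuousWithinAt)
      (fun x hx => (hdiff x (interior_subset hx)).differentiableWithinAt)
    intro x hx
    have hx' : q < x := lt_of_lt_of_le hqp (interior_subset hx).1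
    rw [(hd x hx').deriv]
    have : Real.log (x - q) ≤ Real.log x := Real.log_le_log (by linarith) (by linarith)
    linarith
  have key : ∀ x : ℝ, q < x → x * Real.binEntropy (q/x)
      = x*Real.log x - (x-q)*Real.log (x-q) - q*Real.log q := by
    intro x hx
    have hx0 : 0 < x := hq.trans hx
    rw [Real.binEntropy, Real.log_inv, Real.log_inv, Real.log_div hq.ne' hx0.ne',
        show 1 - q/x = (x-q)/x by field_simp,
        Real.log_div (sub_pos.mpr hx).ne' hx0.ne']
    field_simp
    ring
  rw [key p hqp, key p' (hqp.trans_le hpp')]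
  have := hmono (Set.left_mem_Icc.mpr hpp') (Set.right_mem_Icc.mpr hpp') hpp'
  simp only at this
  linarith

theorem stmt_11 (qX qY : ℝ) (hX : qX ∈ Set.Ioc (0:ℝ) (1/2)) (hY : qY ∈ Set.Ioc (0:ℝ) (1/2))
    (G : ℝ → ℝ)
    (hG : ∀ θ, G θ = (1 - qX) * Hb ((qY - θ) / (1 - qX)) + qX * Hb (θ / qX)) :
    ∀ θ ∈ Set.Icc (max 0 (qX + qY - 1)) (min qX qY), G (min qX qY) ≤ G θ := by
  obtain ⟨hX0, hX2⟩ := hX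
  obtain ⟨hY0, hY2⟩ := hY
  have h1x : 0 < 1 - qX := by linarith
  have hb0 : 0 < min qX qY := lt_min hX0 hY0
  have hmax : max 0 (qX + qY - 1) = 0 := max_eq_left (by linarith)
  intro θ hθ
  rw [hmax] at hθ
  -- concavity of G on [0, min qX qY]
  have hGeq : G = fun t => (1-qX) • Real.binEntropy (qY/(1-qX) + (-(1-qX)⁻¹)*t)
      + qX • Real.binEntropy (0 + qX⁻¹*t) := by
    funext t
    rw [hG t, hHbEq, hHbEq, show (qY - t)/(1-qX) = qY/(1-qX) + (-(1-qX)⁻¹)*t from by ring,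
      show t/qX = 0 + qX⁻¹*t from by ring]
    simp [smul_eq_mul]
  have hconc : ConcaveOn ℝ (Set.Icc 0 (min qX qY)) G := by
    rw [hGeq]
    apply ConcaveOn.add
    · apply ConcaveOn.smul (by linarith : (0:ℝ) ≤ 1 - qX)
      apply concaveOn_binEntropy_affine (convex_Icc _ _)
      intro x hx
      have hx1 : x ≤ qY := hx.2.trans (min_le_right _ _)
      have hx0 := hx.1
      rw [show qY/(1-qX) + (-(1-qX)⁻¹)*x = (qY - x)/(1-qX) from by ring]
      constructor
      · exact div_nonneg (by linarith) h1x.le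
      · rw [div_le_one h1x]; linarith
    · apply ConcaveOn.smul hX0.le
      apply concaveOn_binEntropy_affine (convex_Icc _ _)
      intro x hx
      have hx1 : x ≤ qX := hx.2.trans (min_le_left _ _)
      rw [show (0:ℝ) + qX⁻¹*x = x/qX from by ring]
      exact ⟨div_nonneg hx.1 hX0.le, by rw [div_le_one hX0]; linarith⟩
  have hmin : min (G 0) (G (min qX qY)) ≤ G θ := by
    apply hconc.min_le_of_mem_segment (Set.left_mem_Icc.mpr hb0.le) (Set.right_mem_Icc.mpr hb0.le)
    rw [segment_eq_Icc hb0.le]; exact hθ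
  have hHb0 : Hb 0 = 0 := by simp [Hb]
  have hHb1 : Hb 1 = 0 := by simp [Hb]
  have hG0 : G 0 = (1-qX) * Hb (qY/(1-qX)) := by
    rw [hG, sub_zero, zero_div, hHb0]; ring
  suffices h : G (min qX qY) ≤ G 0 by
    rw [min_eq_right h] at hmin; exact hmin
  rcases le_or_gt qX qY with hxy | hyx
  · rw [min_eq_left hxy, hG0, hG qX, div_self hX0.ne', hHb1, mul_zero, add_zero]
    apply mul_le_mul_of_nonneg_left _ h1x.le
    rw [hHbEq, hHbEq]
    apply binEntropy_le_binEntropy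
    · exact div_nonneg (by linarith) h1x.le
    · exact (div_le_div_iff_of_pos_right h1x).mpr (by linarith)
    · rw [show (1:ℝ) - qY/(1-qX) = (1-qX-qY)/(1-qX) from by field_simp]
      exact (div_le_div_iff_of_pos_right h1x).mpr (by linarith)
  · rw [min_eq_right hyx.le, hG0, hG qY, sub_self, zero_div, hHb0, mul_zero, zero_add,
      hHbEq, hHbEq]
    exact mul_binEntropy_div_mono qY qX (1-qX) hY0 hyx (by linarith)
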